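/- arXiv:1609.07235 — 3 statements merged into one kernel-verified Lean document; each statement's English description precedes it below -/
import Mathlib

section
/- Let m = 2 and a_k = 4^{−k} for k = 1, 2, …, and let I = I_ā be the associated Cantor-like set, regarded as a compact subset of ℂ. Then the logarithmic capacity of I is positive: Cap I > 0. -/
open MeasureTheory Filter Metric

/-- `∏_{1 ≤ j < k ≤ n} |z_j − z_k|` for a tuple of `n` points of `ℂ`. -/
noncomputable def pairProd {n : ℕ} (z : Fin n → ℂ) : ℝ :=
  ∏ q ∈ Finset.univ.filter (fun q : Fin n × Fin n => q.1 < q.2), ‖z q.1 - z q.2‖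

/-- `P_n(E)`, the maximum of `∏_{j<k} |z_j − z_k|` over `z_1, …, z_n ∈ E`. -/
noncomputable def Pseq (E : Set ℂ) (n : ℕ) : ℝ :=
  sSup { p : ℝ | ∃ z : Fin n → ℂ, (∀ i, z i ∈ E) ∧ p = pairProd z }

/-- `D_n(E) = P_n(E)^{2/(n(n−1))}`. -/
noncomputable def Dseq (E : Set ℂ) (n : ℕ) : ℝ :=
  Pseq E n ^ ((2 : ℝ) / ((n : ℝ) * ((n : ℝ) - 1)))

/-- The logarithmic capacity `Cap E = lim_{n→∞} D_n(E)` is positive, i.e. the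
(non-increasing) sequence `D_n(E)` tends to a positive limit. -/
def PositiveCapacity (E : Set ℂ) : Prop :=
  ∃ L : ℝ, 0 < L ∧ Filter.Tendsto (fun n => Dseq E n) Filter.atTop (nhds L)

/-- `A_k = a_1 ⋯ a_k` (with `A_0 = 1`). -/
noncomputable def cantorA (a : ℕ → ℝ) (k : ℕ) : ℝ := ∏ i ∈ Finset.Icc 1 k, a i

/-- The Cantor-like set
`I_ā = { Σ_{k=1}^∞ d_k (A_{k−1} − A_k)/(m−1) : each d_k ∈ {0, 1, …, m−1} }`. -/
noncomputable def cantorLikeSet (m : ℕ) (a : ℕ → ℝ) : Set ℝ :=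
  { x | ∃ d : ℕ → ℕ, (∀ k, d k < m) ∧
      x = ∑' k : ℕ, (d (k + 1) : ℝ) * (cantorA a k - cantorA a (k + 1)) / (m - 1) }


namespace Stmt10

noncomputable def A (k : ℕ) : ℝ := (2:ℝ)⁻¹ ^ (k*(k+1))
lemma A_pos (k : ℕ) : 0 < A k := pow_pos (by norm_num) _
lemma A_anti {k l : ℕ} (h : k ≤ l) : A l ≤ A k :=
  pow_le_pow_of_le_one (by norm_num) (by norm_num) (Nat.mul_le_mul h (by omega))
noncomputable def ept (s : ℕ) {K : ℕ} (b : Fin K → Bool) : ℝ :=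
  ∑ k : Fin K, cond (b k) (A (s + k) - A (s + k + 1)) 0
lemma ept_nonneg (s : ℕ) {K : ℕ} (b : Fin K → Bool) : 0 ≤ ept s b := by
  apply Finset.sum_nonneg; intro k _
  cases b k <;> simp [sub_nonneg, A_anti, Nat.le_succ]
lemma ept_le (s : ℕ) {K : ℕ} (b : Fin K → Bool) : ept s b ≤ A s - A (s + K) := by
  have h1 : ept s b ≤ ∑ k : Fin K, (A (s + k) - A (s + k + 1)) := by
    apply Finset.sum_le_sum; intro k _
    cases b k <;> simp [sub_nonneg, A_anti, Nat.le_succ]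
  have h2 : ∑ k : Fin K, (A (s + k) - A (s + k + 1)) = A s - A (s + K) := by
    rw [Fin.sum_univ_eq_sum_range (fun k => A (s + k) - A (s + k + 1))]
    simpa [add_assoc] using Finset.sum_range_sub' (fun k => A (s + k)) K
  linarith
lemma ept_cons (s : ℕ) {K : ℕ} (c : Bool) (t : Fin K → Bool) :
    ept s (Fin.cons c t) = cond c (A s - A (s+1)) 0 + ept (s+1) t := by
  rw [ept, Fin.sum_univ_succ, ept]
  simp only [Fin.cons_zero, Fin.cons_succ, Fin.val_zero, Fin.val_succ, Nat.add_zero]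
  congr 1
  apply Finset.sum_congr rfl
  intro k _
  rw [show s + (↑k + 1) = s + 1 + ↑k by omega]

lemma gap_ge (s : ℕ) : (2:ℝ)⁻¹ ^ ((s+1)^2) ≤ A s - 2 * A (s+1) := by
  rw [A, A]
  have hx : (0:ℝ) < (2:ℝ)⁻¹ ^ (s*(s+1)) := pow_pos (by norm_num) _
  have ea : (2:ℝ)⁻¹ ^ ((s+1)^2) = (2:ℝ)⁻¹ ^ (s*(s+1)) * (2:ℝ)⁻¹ ^ (s+1) := by
    rw [← pow_add]; congr 1; ring
  have eb : (2:ℝ)⁻¹ ^ ((s+1)*(s+1+1)) = (2:ℝ)⁻¹ ^ (s*(s+1)) * (2:ℝ)⁻¹ ^ (2*s+2) := by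
    rw [← pow_add]; congr 1; ring
  have h1 : ((2:ℝ)⁻¹) ^ (s+1) ≤ (1:ℝ)/2 := by
    have := pow_le_pow_of_le_one (by norm_num : (0:ℝ) ≤ 2⁻¹) (by norm_num) (by omega : 1 ≤ s+1)
    simpa using this
  have h2 : ((2:ℝ)⁻¹) ^ (2*s+2) ≤ ((2:ℝ)⁻¹)^2 :=
    pow_le_pow_of_le_one (by norm_num : (0:ℝ) ≤ 2⁻¹) (by norm_num) (by omega : 2 ≤ 2*s+2)
  have h3 : ((2:ℝ)⁻¹:ℝ)^2 = 1/4 := by norm_num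
  rw [ea, eb]
  nlinarith [mul_le_mul_of_nonneg_left h1 hx.le, mul_le_mul_of_nonneg_left h2 hx.le, h3, hx]

lemma sep_true (s : ℕ) {K : ℕ} (u u' : Fin K → Bool) :
    A s - 2 * A (s+1) ≤ ept s (Fin.cons true u) - ept s (Fin.cons false u') := by
  rw [ept_cons, ept_cons]
  have h1 := ept_le (s+1) u'
  have h2 := ept_nonneg (s+1) u
  have h3 := (A_pos (s+1+K)).le
  simp only [cond_true, cond_false, zero_add]
  linarith

lemma sep (s : ℕ) {K : ℕ} (c c' : Bool) (t t' : Fin K → Bool) (h : c ≠ c') :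
    A s - 2 * A (s+1) ≤ |ept s (Fin.cons c t) - ept s (Fin.cons c' t')| := by
  cases c <;> cases c' <;> simp at h
  · rw [abs_sub_comm]
    exact (sep_true s t' t).trans (le_abs_self _)
  · exact (sep_true s t t').trans (le_abs_self _)

lemma key : ∀ (K s : ℕ) (b : Fin K → Bool),
    ((2:ℝ)⁻¹ ^ (s^2 + 4*s + 6)) ^ (2^K) ≤
      ∏ b' ∈ Finset.univ.erase b, |ept s b - ept s b'| := by
  intro K
  induction K with
  | zero =>
      intro s b
      have : (Finset.univ.erase b) = ∅ := by
        apply Finset.eq_empty_iff_forall_notMem.2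
        intro b' hb'
        exact (Finset.mem_erase.1 hb').1 (Subsingleton.elim b' b)
      rw [this, Finset.prod_empty, pow_zero, pow_one]
      exact pow_le_one₀ (by norm_num) (by norm_num)
  | succ K ih =>
      intro s b
      have hb : b = Fin.cons (b 0) (Fin.tail b) := (Fin.cons_self_tail b).symm
      set c := b 0 with hc
      set t := Fin.tail b with ht
      rw [hb]
      rw [← Finset.prod_filter_mul_prod_filter_not (Finset.univ.erase (Fin.cons c t))
            (fun b' : Fin (K+1) → Bool => b' 0 = c)]
      have hP1 : (∏ b' ∈ (Finset.univ.erase (Fin.cons c t)).filter (fun b' : Fin (K+1) → Bool => b' 0 = c),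
            |ept s (Fin.cons c t) - ept s b'|)
          = ∏ t' ∈ Finset.univ.erase t, |ept (s+1) t - ept (s+1) t'| := by
        apply Finset.prod_nbij' (fun b' => Fin.tail b') (fun t' => Fin.cons c t')
        · intro b' hb'
          simp only [Finset.mem_filter, Finset.mem_erase] at hb'
          simp only [Finset.mem_erase, Finset.mem_univ, and_true]
          intro hcontra
          apply hb'.1.1
          rw [← Fin.cons_self_tail b', hb'.2, hcontra]
        · intro t' ht'
          simp only [Finset.mem_erase, Finset.mem_univ, and_true] at ht'
          simp only [Finset.mem_filter, Finset.mem_erase, Finset.mem_univ, and_true,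
            Fin.cons_zero, and_true]
          intro hcontra
          exact ht' (by
            have := congrArg Fin.tail hcontra
            simpa [Fin.tail_cons] using this)
        · intro b' hb'
          simp only [Finset.mem_filter] at hb'
          rw [← hb'.2, Fin.cons_self_tail]
        · intro t' _; simp
        · intro b' hb'
          simp only [Finset.mem_filter] at hb'
          conv_lhs => rw [← Fin.cons_self_tail b', ← hb'.2]
          rw [ept_cons, ept_cons, hb'.2]
          congr 1
          ring
      have hP2 : ((2:ℝ)⁻¹ ^ ((s+1)^2)) ^ (2^K) ≤
          ∏ b' ∈ (Finset.univ.erase (Fin.cons c t)).filter (fun b' : Fin (K+1) → Bool => ¬ b' 0 = c),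
            |ept s (Fin.cons c t) - ept s b'| := by
        have hrw : (∏ b' ∈ (Finset.univ.erase (Fin.cons c t)).filter (fun b' : Fin (K+1) → Bool => ¬ b' 0 = c),
              |ept s (Fin.cons c t) - ept s b'|)
            = ∏ t' ∈ (Finset.univ : Finset (Fin K → Bool)),
                |ept s (Fin.cons c t) - ept s (Fin.cons (!c) t')| := by
          apply Finset.prod_nbij' (fun b' => Fin.tail b') (fun t' => Fin.cons (!c) t')
          · intro b' _; exact Finset.mem_univ _
          · intro t' _
            simp only [Finset.mem_filter, Finset.mem_erase, Finset.mem_univ, and_true,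
              Fin.cons_zero]
            constructor
            · intro hcontra
              have := congrArg (fun f => f 0) hcontra
              simp [Fin.cons_zero] at this
            · simp
          · intro b' hb'
            simp only [Finset.mem_filter, Finset.mem_erase] at hb'
            have hbc : ¬ b' 0 = c := hb'.2
            have : b' 0 = !c := by
              revert hbc; cases hcv : b' 0 <;> cases hcv2 : c <;> simp
            rw [← this, Fin.cons_self_tail]
          · intro t' _; simp
          · intro b' hb'
            simp only [Finset.mem_filter, Finset.mem_erase] at hb'
            have hbc : ¬ b' 0 = c := hb'.2
            have : b' 0 = !c := by
              revert hbc; cases hcv : b' 0 <;> cases hcv2 : c <;> simp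
            conv_lhs => rw [← Fin.cons_self_tail b', this]
        rw [hrw]
        have hcard : (Finset.univ : Finset (Fin K → Bool)).card = 2^K := by
          simp [Finset.card_univ]
        calc ((2:ℝ)⁻¹ ^ ((s+1)^2)) ^ (2^K)
            = ∏ _t' ∈ (Finset.univ : Finset (Fin K → Bool)), (2:ℝ)⁻¹ ^ ((s+1)^2) := by
              rw [Finset.prod_const, hcard]
          _ ≤ _ := by
              apply Finset.prod_le_prod
              · intro _ _; positivity
              · intro t' _
                exact (gap_ge s).trans (sep s c (!c) t t' (by simp))
      have h1 := ih (s+1) t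
      rw [hP1]
      have hnn1 : (0:ℝ) ≤ ((2:ℝ)⁻¹ ^ ((s+1)^2 + 4*(s+1) + 6)) ^ (2^K) := by positivity
      have hnn2 : (0:ℝ) ≤ ((2:ℝ)⁻¹ ^ ((s+1)^2)) ^ (2^K) := by positivity
      calc ((2:ℝ)⁻¹ ^ (s^2 + 4*s + 6)) ^ (2^(K+1))
          = ((2:ℝ)⁻¹ ^ ((s+1)^2 + 4*(s+1) + 6)) ^ (2^K)
            * ((2:ℝ)⁻¹ ^ ((s+1)^2)) ^ (2^K) := by
            rw [← pow_mul, ← pow_mul, ← pow_mul, ← pow_add]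
            congr 1
            ring
        _ ≤ (∏ t' ∈ Finset.univ.erase t, |ept (s+1) t - ept (s+1) t'|)
            * ∏ b' ∈ (Finset.univ.erase (Fin.cons c t)).filter (fun b' : Fin (K+1) → Bool => ¬ b' 0 = c),
                |ept s (Fin.cons c t) - ept s b'| := by
            apply mul_le_mul h1 hP2 hnn2
            exact Finset.prod_nonneg (fun _ _ => abs_nonneg _)

lemma cantorA_eq (n : ℕ) : cantorA (fun k : ℕ => (4:ℝ)⁻¹ ^ k) n = A n := by
  induction n with
  | zero => simp [cantorA, A]
  | succ n ih =>
      rw [cantorA, Finset.prod_Icc_succ_top (by omega), ← cantorA, ih, A, A]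
      have : ((4:ℝ)⁻¹) ^ (n+1) = ((2:ℝ)⁻¹) ^ (2*(n+1)) := by
        rw [pow_mul]; norm_num
      rw [this, ← pow_add]
      congr 1
      ring

lemma A_le_geo (k : ℕ) : A k ≤ (2:ℝ)⁻¹ ^ k :=
  pow_le_pow_of_le_one (by norm_num) (by norm_num) (by nlinarith)

/-- terms of the defining series -/
lemma cantor_mem_bounds {x : ℝ}
    (hx : x ∈ cantorLikeSet 2 (fun k : ℕ => (4:ℝ)⁻¹ ^ k)) : 0 ≤ x ∧ x ≤ 2 := by
  obtain ⟨d, hd, rfl⟩ := hx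
  set f : ℕ → ℝ := fun k =>
    (d (k + 1) : ℝ) * (cantorA (fun k : ℕ => (4:ℝ)⁻¹ ^ k) k
      - cantorA (fun k : ℕ => (4:ℝ)⁻¹ ^ k) (k + 1)) / ((2:ℕ) - 1 : ℝ) with hf
  have hf0 : ∀ k, 0 ≤ f k := by
    intro k
    rw [hf]
    simp only [cantorA_eq]
    have h2 : (0:ℝ) ≤ A k - A (k+1) := sub_nonneg.2 (A_anti (Nat.le_succ k))
    have : ((2:ℕ):ℝ) - 1 = 1 := by norm_num
    rw [this, div_one]
    exact mul_nonneg (by positivity) h2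
  have hfle : ∀ k, f k ≤ (2:ℝ)⁻¹ ^ k := by
    intro k
    rw [hf]
    simp only [cantorA_eq]
    have h1 : (d (k+1) : ℝ) ≤ 1 := by
      have := hd (k+1); exact_mod_cast Nat.lt_succ_iff.mp this
    have h2 : (0:ℝ) ≤ A k - A (k+1) := sub_nonneg.2 (A_anti (Nat.le_succ k))
    have h3 : A k - A (k+1) ≤ A k := by have := (A_pos (k+1)).le; linarith
    have h4 : (d (k+1):ℝ) * (A k - A (k+1)) ≤ A k := by
      calc (d (k+1):ℝ) * (A k - A (k+1)) ≤ 1 * (A k - A (k+1)) :=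
            mul_le_mul_of_nonneg_right h1 h2
        _ = A k - A (k+1) := one_mul _
        _ ≤ A k := h3
    calc (d (k+1):ℝ) * (A k - A (k+1)) / ((2:ℕ) - 1 : ℝ)
        = (d (k+1):ℝ) * (A k - A (k+1)) := by norm_num
      _ ≤ A k := h4
      _ ≤ (2:ℝ)⁻¹ ^ k := A_le_geo k
  have hgs : Summable (fun k : ℕ => (2:ℝ)⁻¹ ^ k) :=
    summable_geometric_of_lt_one (by norm_num) (by norm_num)
  have hfs : Summable f := Summable.of_nonneg_of_le hf0 hfle hgs
  constructor
  · exact tsum_nonneg hf0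
  · calc ∑' k, f k ≤ ∑' k, (2:ℝ)⁻¹ ^ k := Summable.tsum_le_tsum hfle hfs hgs
      _ = (1 - 2⁻¹)⁻¹ := tsum_geometric_of_lt_one (by norm_num) (by norm_num)
      _ = 2 := by norm_num

lemma mem_cantor {K : ℕ} (b : Fin K → Bool) :
    ept 0 b ∈ cantorLikeSet 2 (fun k : ℕ => (4:ℝ)⁻¹ ^ k) := by
  classical
  set d : ℕ → ℕ := fun k => if h : 1 ≤ k ∧ k ≤ K then (if b ⟨k-1, by omega⟩ then 1 else 0) else 0
    with hd
  refine ⟨d, ?_, ?_⟩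
  · intro k
    rw [hd]
    dsimp only
    split
    · split <;> omega
    · omega
  · have hside : ∀ k ∉ Finset.range K,
        (d (k + 1) : ℝ) * (cantorA (fun k : ℕ => (4:ℝ)⁻¹ ^ k) k
          - cantorA (fun k : ℕ => (4:ℝ)⁻¹ ^ k) (k + 1)) / (((2:ℕ):ℝ) - 1) = 0 := by
      intro k hk
      rw [Finset.mem_range, not_lt] at hk
      have hd0 : d (k+1) = 0 := by
        rw [hd]; dsimp only; rw [dif_neg (by omega)]
      rw [hd0]
      norm_num
    rw [tsum_eq_sum hside]
    set g : ℕ → ℝ :=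
      fun m => if h : m < K then cond (b ⟨m, h⟩) (A (0+m) - A (0+m+1)) 0 else 0 with hg
    have h0 : ept 0 b = ∑ k : Fin K, g ↑k := by
      rw [ept]
      refine Finset.sum_congr rfl fun k _ => ?_
      rw [hg]
      dsimp only
      rw [dif_pos k.isLt, Fin.eta]
    rw [h0, Fin.sum_univ_eq_sum_range g K]
    apply Finset.sum_congr rfl
    intro k hk
    rw [Finset.mem_range] at hk
    rw [hg]
    dsimp only
    rw [dif_pos hk]
    have hd1 : d (k+1) = (if b ⟨k, hk⟩ then 1 else 0) := by
      rw [hd]; dsimp only; rw [dif_pos (by omega : 1 ≤ k + 1 ∧ k + 1 ≤ K)]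
      simp only [Nat.add_sub_cancel]
    rw [hd1]
    simp only [cantorA_eq, zero_add]
    cases b ⟨k, hk⟩ <;> norm_num


lemma pairProd_nonneg {n : ℕ} (z : Fin n → ℂ) : 0 ≤ pairProd z :=
  Finset.prod_nonneg fun _ _ => norm_nonneg _

lemma pairProd_del {n : ℕ} (i : Fin (n+1)) (z : Fin (n+1) → ℂ) :
    pairProd (z ∘ i.succAbove) =
      ∏ q ∈ Finset.univ.filter
          (fun q : Fin (n+1) × Fin (n+1) => q.1 < q.2 ∧ q.1 ≠ i ∧ q.2 ≠ i),
        ‖z q.1 - z q.2‖ := by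
  apply Finset.prod_nbij (fun q : Fin n × Fin n => (i.succAbove q.1, i.succAbove q.2))
  · intro q hq
    simp only [Finset.mem_filter, Finset.mem_univ, true_and] at hq ⊢
    exact ⟨Fin.succAbove_lt_succAbove_iff.2 hq, Fin.succAbove_ne i q.1, Fin.succAbove_ne i q.2⟩
  · intro q _ q' _ h
    simp only [Prod.mk.injEq] at h
    exact Prod.ext (Fin.succAbove_right_injective h.1) (Fin.succAbove_right_injective h.2)
  · intro q hq
    simp only [Finset.coe_filter, Set.mem_setOf_eq, Finset.mem_univ, true_and] at hq
    obtain ⟨h1, h2, h3⟩ := hq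
    obtain ⟨j, hj⟩ := Fin.exists_succAbove_eq h2
    obtain ⟨k, hk⟩ := Fin.exists_succAbove_eq h3
    refine ⟨(j, k), ?_, ?_⟩
    · simp only [Finset.coe_filter, Set.mem_setOf_eq, Finset.mem_univ, true_and]
      rw [← Fin.succAbove_lt_succAbove_iff (p := i), hj, hk]; exact h1
    · simp [hj, hk]
  · intro q _; rfl

lemma prod_del {n : ℕ} (z : Fin (n+1) → ℂ) :
    ∏ i : Fin (n+1), pairProd (z ∘ i.succAbove) = pairProd z ^ (n-1) := by
  have h1 : ∀ i : Fin (n+1), pairProd (z ∘ i.succAbove) =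
      ∏ q ∈ Finset.univ.filter (fun q : Fin (n+1) × Fin (n+1) => q.1 < q.2),
        (if q.1 ≠ i ∧ q.2 ≠ i then ‖z q.1 - z q.2‖ else 1) := by
    intro i
    rw [pairProd_del i z]
    rw [← Finset.prod_filter (fun q : Fin (n+1) × Fin (n+1) => q.1 ≠ i ∧ q.2 ≠ i)
      (fun q => ‖z q.1 - z q.2‖), Finset.filter_filter]
  simp only [h1]
  rw [Finset.prod_comm]
  rw [pairProd, ← Finset.prod_pow]
  apply Finset.prod_congr rfl
  intro q hq
  simp only [Finset.mem_filter, Finset.mem_univ, true_and] at hq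
  rw [← Finset.prod_filter]
  rw [Finset.prod_const]
  congr 1
  have : Finset.univ.filter (fun i : Fin (n+1) => q.1 ≠ i ∧ q.2 ≠ i)
      = Finset.univ \ {q.1, q.2} := by
    ext i
    simp [eq_comm, and_comm]
  rw [this, Finset.card_sdiff_of_subset (by simp)]
  rw [Finset.card_insert_of_notMem (by simp [hq.ne]), Finset.card_singleton]
  simp

lemma sq_pairProd {n : ℕ} (z : Fin n → ℂ) :
    pairProd z ^ 2 = ∏ j : Fin n, ∏ k ∈ Finset.univ.erase j, ‖z j - z k‖ := by
  have hswap : (∏ q ∈ Finset.univ.filter (fun q : Fin n × Fin n => q.2 < q.1),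
      ‖z q.1 - z q.2‖) = pairProd z := by
    rw [pairProd]
    apply Finset.prod_nbij' (fun q : Fin n × Fin n => (q.2, q.1))
      (fun q : Fin n × Fin n => (q.2, q.1))
    · intro q hq; simp only [Finset.mem_filter, Finset.mem_univ, true_and] at *; exact hq
    · intro q hq; simp only [Finset.mem_filter, Finset.mem_univ, true_and] at *; exact hq
    · intro q _; rfl
    · intro q _; rfl
    · intro q _; exact norm_sub_rev _ _
  have hsplit : Finset.univ.filter (fun q : Fin n × Fin n => q.1 ≠ q.2)
      = Finset.univ.filter (fun q : Fin n × Fin n => q.1 < q.2)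
        ∪ Finset.univ.filter (fun q : Fin n × Fin n => q.2 < q.1) := by
    ext q
    simp only [Finset.mem_filter, Finset.mem_univ, true_and, Finset.mem_union]
    exact ne_iff_lt_or_gt
  have hdisj : Disjoint (Finset.univ.filter (fun q : Fin n × Fin n => q.1 < q.2))
      (Finset.univ.filter (fun q : Fin n × Fin n => q.2 < q.1)) := by
    apply Finset.disjoint_filter_filter'
    rw [disjoint_iff_inf_le]
    intro q hq
    simp only [Pi.inf_apply] at hq
    exact absurd hq (by simp; intro h1; omega)
  have hoff : (∏ q ∈ Finset.univ.filter (fun q : Fin n × Fin n => q.1 ≠ q.2),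
      ‖z q.1 - z q.2‖) = pairProd z ^ 2 := by
    rw [hsplit, Finset.prod_union hdisj, hswap, pairProd, sq]
  rw [← hoff]
  rw [Finset.prod_filter, Fintype.prod_prod_type]
  apply Finset.prod_congr rfl
  intro j _
  rw [← Finset.prod_filter]
  apply Finset.prod_congr _ (fun _ _ => rfl)
  ext k
  simp [ne_comm, eq_comm]


noncomputable def E0 : Set ℂ := Complex.ofReal '' cantorLikeSet 2 (fun k : ℕ => (4:ℝ)⁻¹ ^ k)

lemma zero_mem : (0:ℝ) ∈ cantorLikeSet 2 (fun k : ℕ => (4:ℝ)⁻¹ ^ k) := by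
  have := mem_cantor (K := 0) (fun _ => false)
  simpa [ept] using this

lemma E0_abs {z : ℂ} (hz : z ∈ E0) : ‖z‖ ≤ 2 := by
  obtain ⟨x, hx, rfl⟩ := hz
  obtain ⟨h0, h2⟩ := cantor_mem_bounds hx
  rw [Complex.norm_real, Real.norm_eq_abs, abs_of_nonneg h0]
  exact h2

lemma S_nonempty (n : ℕ) :
    Set.Nonempty { p : ℝ | ∃ z : Fin n → ℂ, (∀ i, z i ∈ E0) ∧ p = pairProd z } :=
  ⟨pairProd (fun _ : Fin n => ((0:ℝ):ℂ)),
    fun _ : Fin n => ((0:ℝ):ℂ), fun _ => ⟨0, zero_mem, rfl⟩, rfl⟩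

lemma S_bddAbove (n : ℕ) :
    BddAbove { p : ℝ | ∃ z : Fin n → ℂ, (∀ i, z i ∈ E0) ∧ p = pairProd z } := by
  refine ⟨(4:ℝ) ^ (n*n), ?_⟩
  rintro p ⟨z, hz, rfl⟩
  calc pairProd z
      ≤ ∏ _q ∈ Finset.univ.filter (fun q : Fin n × Fin n => q.1 < q.2), (4:ℝ) := by
        apply Finset.prod_le_prod (fun _ _ => norm_nonneg _)
        intro q _
        have h1 : ‖z q.1 - z q.2‖ ≤ ‖z q.1‖ + ‖z q.2‖ := by
          simpa using norm_sub_le (z q.1) (z q.2)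
        have h2 := E0_abs (hz q.1)
        have h3 := E0_abs (hz q.2)
        linarith
    _ = (4:ℝ) ^ (Finset.univ.filter (fun q : Fin n × Fin n => q.1 < q.2)).card :=
        Finset.prod_const _
    _ ≤ (4:ℝ) ^ (n*n) := by
        apply pow_le_pow_right₀ (by norm_num)
        calc (Finset.univ.filter (fun q : Fin n × Fin n => q.1 < q.2)).card
            ≤ (Finset.univ : Finset (Fin n × Fin n)).card := Finset.card_filter_le _ _
          _ = n * n := by simp

lemma le_Pseq {n : ℕ} (z : Fin n → ℂ) (hz : ∀ i, z i ∈ E0) : pairProd z ≤ Pseq E0 n :=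
  le_csSup (S_bddAbove n) ⟨z, hz, rfl⟩

lemma Pseq_nonneg (n : ℕ) : 0 ≤ Pseq E0 n :=
  (pairProd_nonneg _).trans (le_Pseq (fun _ => ((0:ℝ):ℂ)) (fun _ => ⟨0, zero_mem, rfl⟩))

lemma Dstep (n : ℕ) (hn : 2 ≤ n) : Dseq E0 (n+1) ≤ Dseq E0 n := by
  have hn2 : (2:ℝ) ≤ (n:ℝ) := by exact_mod_cast hn
  have hP0 : 0 ≤ Pseq E0 n := Pseq_nonneg n
  set P := Pseq E0 n with hPdef
  set X : ℝ := (P ^ (n+1)) ^ ((1:ℝ)/((n:ℝ)-1)) with hX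
  have hX0 : 0 ≤ X := Real.rpow_nonneg (by positivity) _
  have hcast : ((n-1:ℕ):ℝ) = (n:ℝ) - 1 := by
    rw [Nat.cast_sub (by omega : 1 ≤ n)]; simp
  have hXpow : X ^ (n-1) = P ^ (n+1) := by
    rw [hX, ← Real.rpow_natCast ((P ^ (n+1)) ^ ((1:ℝ)/((n:ℝ)-1))) (n-1),
      ← Real.rpow_mul (by positivity), hcast]
    have hne : ((n:ℝ) - 1) ≠ 0 := ne_of_gt (by linarith)
    have h1 : (1:ℝ)/((n:ℝ)-1) * ((n:ℝ) - 1) = 1 := by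
      rw [div_mul_eq_mul_div, one_mul, div_self hne]
    rw [h1, Real.rpow_one]
  have hQX : Pseq E0 (n+1) ≤ X := by
    apply csSup_le (S_nonempty (n+1))
    rintro p ⟨z, hz, rfl⟩
    have hkey : pairProd z ^ (n-1) ≤ P ^ (n+1) := by
      rw [← prod_del z]
      calc ∏ i : Fin (n+1), pairProd (z ∘ i.succAbove)
          ≤ ∏ _i : Fin (n+1), P := Finset.prod_le_prod (fun _ _ => pairProd_nonneg _)
            (fun i _ => le_Pseq _ (fun j => hz _))
        _ = P ^ (n+1) := by rw [Finset.prod_const, Finset.card_univ, Fintype.card_fin]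
    exact (pow_le_pow_iff_left₀ (pairProd_nonneg z) hX0 (by omega : n - 1 ≠ 0)).1
      (hkey.trans_eq hXpow.symm)
  rw [Dseq, Dseq]
  have hr0 : (0:ℝ) ≤ 2 / ((((n:ℕ)+1:ℕ):ℝ) * ((((n:ℕ)+1:ℕ):ℝ) - 1)) := by
    push_cast
    apply div_nonneg (by norm_num)
    nlinarith
  calc Pseq E0 (n+1) ^ ((2:ℝ) / ((((n+1:ℕ)):ℝ) * ((((n+1:ℕ)):ℝ) - 1)))
      ≤ X ^ ((2:ℝ) / ((((n+1:ℕ)):ℝ) * ((((n+1:ℕ)):ℝ) - 1))) :=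
        Real.rpow_le_rpow (Pseq_nonneg (n+1)) hQX (by push_cast; apply div_nonneg (by norm_num); nlinarith)
    _ = P ^ ((2:ℝ) / ((n:ℝ) * ((n:ℝ) - 1))) := by
        rw [hX, ← Real.rpow_natCast P (n+1), ← Real.rpow_mul hP0, ← Real.rpow_mul hP0]
        congr 1
        have h1 : (n:ℝ) ≠ 0 := by linarith
        have h2 : (n:ℝ) - 1 ≠ 0 := by intro h; nlinarith [h]
        have h3 : (n:ℝ) + 1 ≠ 0 := by linarith
        push_cast
        field_simp
        ring_nf
        exact mul_inv_cancel₀ h1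

lemma Dlow (K : ℕ) (hK : 1 ≤ K) : (2:ℝ)⁻¹ ^ 12 ≤ Dseq E0 (2^K) := by
  classical
  set N := 2^K with hN
  have hcards : Fintype.card (Fin N) = Fintype.card (Fin K → Bool) := by
    simp [hN]
  set σ : Fin N ≃ (Fin K → Bool) := Fintype.equivOfCardEq hcards with hσ
  set z : Fin N → ℂ := fun i => ((ept 0 (σ i) : ℝ) : ℂ) with hz
  have hzE : ∀ i, z i ∈ E0 := fun i => ⟨ept 0 (σ i), mem_cantor _, rfl⟩
  set ρ : ℝ := (2:ℝ)⁻¹ ^ 6 with hρ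
  have hρ0 : (0:ℝ) < ρ := by rw [hρ]; positivity
  have hρ1 : ρ ≤ 1 := by rw [hρ]; norm_num
  have hper : ∀ j : Fin N, ρ ^ (2^K) ≤ ∏ k ∈ Finset.univ.erase j, ‖z j - z k‖ := by
    intro j
    have hEq : (∏ k ∈ Finset.univ.erase j, ‖z j - z k‖)
        = ∏ b' ∈ Finset.univ.erase (σ j), |ept 0 (σ j) - ept 0 b'| := by
      apply Finset.prod_nbij' (fun k => σ k) (fun b' => σ.symm b')
      · intro k hk
        simp only [Finset.mem_erase, Finset.mem_univ, and_true] at *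
        intro h; exact hk (σ.injective h)
      · intro b' hb'
        simp only [Finset.mem_erase, Finset.mem_univ, and_true] at *
        intro h
        apply hb'
        rw [← Equiv.apply_symm_apply σ b', h]
      · intro k _; exact σ.symm_apply_apply k
      · intro b' _; exact σ.apply_symm_apply b'
      · intro k _
        rw [hz]
        dsimp only
        rw [← Complex.ofReal_sub, Complex.norm_real, Real.norm_eq_abs]
    rw [hEq]
    have := key K 0 (σ j)
    simpa [hρ] using this
  have hN2 : (2:ℕ) ≤ N := by
    rw [hN]
    calc (2:ℕ) = 2^1 := by norm_num
      _ ≤ 2^K := Nat.pow_le_pow_right (by norm_num) hK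
  have hsq : (ρ ^ (2^(2*K-1)))^2 ≤ pairProd z ^ 2 := by
    have h1 : (ρ ^ (2^(2*K-1)))^2 = ρ ^ (2^K * 2^K) := by
      rw [← pow_mul]
      congr 1
      have : 2^(2*K-1) * 2 = 2^(2*K) := by
        rw [← pow_succ]
        congr 1
        omega
      rw [this, ← pow_add]
      congr 1
      omega
    rw [h1, sq_pairProd z]
    calc ρ ^ (2^K * 2^K) = ∏ _j : Fin N, ρ ^ (2^K) := by
          rw [Finset.prod_const, Finset.card_univ, Fintype.card_fin, hN]
          exact pow_mul ρ (2^K) (2^K)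
      _ ≤ _ := Finset.prod_le_prod (fun _ _ => by positivity) (fun j _ => hper j)
  have hM : ρ ^ (2^(2*K-1)) ≤ pairProd z :=
    (pow_le_pow_iff_left₀ (by positivity) (pairProd_nonneg z) (by norm_num : (2:ℕ) ≠ 0)).1 hsq
  have hMP : ρ ^ (2^(2*K-1)) ≤ Pseq E0 N := hM.trans (le_Pseq z hzE)
  have hNc : (2:ℝ) ≤ (N:ℝ) := by exact_mod_cast hN2
  have hrpos : (0:ℝ) ≤ (2:ℝ) / ((N:ℝ) * ((N:ℝ) - 1)) := by
    apply div_nonneg (by norm_num)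
    nlinarith
  rw [Dseq]
  calc (2:ℝ)⁻¹ ^ 12 = ρ ^ (2:ℝ) := by
        have h2 : ρ ^ (2:ℝ) = ρ ^ (2:ℕ) := by
          rw [← Real.rpow_natCast ρ 2]
          norm_num
        rw [h2, hρ, ← pow_mul]
    _ ≤ ρ ^ (((2^(2*K-1) : ℕ):ℝ) * ((2:ℝ) / ((N:ℝ) * ((N:ℝ) - 1)))) := by
        apply Real.rpow_le_rpow_of_exponent_ge hρ0 hρ1
        have hc2 : ((2^(2*K-1):ℕ):ℝ) * 2 = (N:ℝ) * (N:ℝ) := by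
          push_cast
          rw [← pow_succ]
          have : 2*K - 1 + 1 = 2*K := by omega
          rw [this, hN]
          push_cast
          rw [two_mul, pow_add]
        have hden : (0:ℝ) < (N:ℝ) * ((N:ℝ) - 1) := by nlinarith
        rw [mul_div_assoc', div_le_iff₀ hden, hc2]
        nlinarith
    _ = (ρ ^ (2^(2*K-1) : ℕ)) ^ ((2:ℝ) / ((N:ℝ) * ((N:ℝ) - 1))) := by
        rw [← Real.rpow_natCast ρ (2^(2*K-1)), ← Real.rpow_mul hρ0.le]
    _ ≤ Pseq E0 N ^ ((2:ℝ) / ((N:ℝ) * ((N:ℝ) - 1))) :=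
        Real.rpow_le_rpow (by positivity) hMP hrpos

end Stmt10

/-- For `m = 2` and `a_k = 4^{−k}`, the Cantor-like set `I`, regarded as a compact
subset of `ℂ`, has positive logarithmic capacity. -/
theorem stmt10 :
    PositiveCapacity (Complex.ofReal '' cantorLikeSet 2 (fun k : ℕ => (4 : ℝ)⁻¹ ^ k)) := by
  have hE : Complex.ofReal '' cantorLikeSet 2 (fun k : ℕ => (4 : ℝ)⁻¹ ^ k) = Stmt10.E0 := rfl
  rw [hE]
  set c0 : ℝ := (2:ℝ)⁻¹ ^ 12 with hc0
  have hc0pos : (0:ℝ) < c0 := by rw [hc0]; positivity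
  set g : ℕ → ℝ := fun j => Dseq Stmt10.E0 (j+2) with hg
  have hganti : Antitone g := by
    apply antitone_nat_of_succ_le
    intro j
    have : j + 1 + 2 = (j + 2) + 1 := by omega
    rw [hg]
    dsimp only
    rw [this]
    exact Stmt10.Dstep (j+2) (by omega)
  have hchain : ∀ i j : ℕ, i ≤ j → g j ≤ g i := fun i j h => hganti h
  have hlb : ∀ j, c0 ≤ g j := by
    intro j
    have h1 : c0 ≤ Dseq Stmt10.E0 (2^(j+2)) := Stmt10.Dlow (j+2) (by omega)
    have h4 : 1 ≤ 2^j := Nat.one_le_two_pow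
    have h5 : j < 2^j := Nat.lt_two_pow_self
    have hexp : 2^(j+2) = 2^j * 4 := by ring
    have h2 : Dseq Stmt10.E0 (2^(j+2)) = g (2^(j+2) - 2) := by
      rw [hg]
      dsimp only
      congr 1
      omega
    have h3 : g (2^(j+2) - 2) ≤ g j := hchain j _ (by omega)
    calc c0 ≤ Dseq Stmt10.E0 (2^(j+2)) := h1
      _ = g (2^(j+2) - 2) := h2
      _ ≤ g j := h3
  have hbdd : BddBelow (Set.range g) := by
    refine ⟨c0, ?_⟩
    rintro x ⟨j, rfl⟩
    exact hlb j
  have htend : Filter.Tendsto g Filter.atTop (nhds (⨅ j, g j)) :=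
    tendsto_atTop_ciInf hganti hbdd
  refine ⟨⨅ j, g j, ?_, ?_⟩
  · exact lt_of_lt_of_le hc0pos (le_ciInf hlb)
  · exact (Filter.tendsto_add_atTop_iff_nat 2).1 htend
end

section
/- Fix an integer m ≥ 2 and a sequence ā = (a_1, a_2, …) with 0 < a_k ≤ 1/(m+1) for all k and liminf_{k→∞} a_k = 0, and let I_ā be the associated Cantor-like set. Then the product set E = I_ā × I_ā, as a compact subset of ℝ² (equivalently ℂ), is hereditarily non uniformly perfect. -/
open MeasureTheory Filter Metric

/-- A compact set `F` with at least two points is uniformly perfect if there is `c > 0`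
such that for every `a ∈ F` and every `r` with `0 < r < diam F` the annulus
`{y : c·r < ‖y − a‖ < r}` meets `F`. -/
def UniformlyPerfect {X : Type*} [NormedAddCommGroup X] (F : Set X) : Prop :=
  IsCompact F ∧ F.Nontrivial ∧
    ∃ c : ℝ, 0 < c ∧ ∀ a ∈ F, ∀ r : ℝ, 0 < r → r < Metric.diam F →
      ∃ y ∈ F, c * r < ‖y - a‖ ∧ ‖y - a‖ < r

/-- A compact set is hereditarily non uniformly perfect (HNUP) if no (compact) subset
of it is uniformly perfect. -/
def HNUP {X : Type*} [NormedAddCommGroup X] (E : Set X) : Prop :=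
  ∀ F : Set X, F ⊆ E → ¬ UniformlyPerfect F

set_option linter.unusedSectionVars false
set_option linter.unusedVariables false
set_option maxHeartbeats 1000000

namespace Stmt11Aux


lemma A_zero (a : ℕ → ℝ) : cantorA a 0 = 1 := by simp [cantorA]

lemma A_succ (a : ℕ → ℝ) (k : ℕ) : cantorA a (k+1) = cantorA a k * a (k+1) := by
  rw [cantorA, cantorA, Finset.prod_Icc_succ_top (Nat.succ_le_succ (Nat.zero_le k))]

variable {m : ℕ} {a : ℕ → ℝ} (hm : 2 ≤ m)
  (ha : ∀ k : ℕ, 1 ≤ k → 0 < a k ∧ a k ≤ 1 / (m + 1))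

include hm ha

lemma A_pos (k : ℕ) : 0 < cantorA a k := by
  induction k with
  | zero => simp [A_zero]
  | succ n ih =>
      rw [A_succ]
      exact mul_pos ih (ha (n+1) (Nat.succ_le_succ (Nat.zero_le n))).1

lemma A_succ_le (k : ℕ) : cantorA a (k+1) ≤ cantorA a k * (1 / (m + 1)) := by
  rw [A_succ]
  exact mul_le_mul_of_nonneg_left (ha (k+1) (Nat.succ_le_succ (Nat.zero_le k))).2
    (A_pos hm ha k).le

lemma A_le_pow (k : ℕ) : cantorA a k ≤ (1 / ((m:ℝ) + 1))^k := by
  induction k with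
  | zero => simp [A_zero]
  | succ n ih =>
      calc cantorA a (n+1) ≤ cantorA a n * (1 / (m + 1)) := A_succ_le hm ha n
        _ ≤ (1 / ((m:ℝ) + 1))^n * (1 / (m + 1)) := by
            apply mul_le_mul_of_nonneg_right ih
            positivity
        _ = (1 / ((m:ℝ) + 1))^(n+1) := by ring

lemma A_antitone : Antitone (cantorA a) := by
  apply antitone_nat_of_succ_le
  intro n
  calc cantorA a (n+1) ≤ cantorA a n * (1/(m+1)) := A_succ_le hm ha n
    _ ≤ cantorA a n * 1 := by
        apply mul_le_mul_of_nonneg_left _ (A_pos hm ha n).le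
        rw [div_le_one] <;> [skip; positivity]
        norm_num
    _ = cantorA a n := mul_one _

lemma A_tendsto : Tendsto (cantorA a) atTop (nhds 0) := by
  have h1 : Tendsto (fun k => (1 / ((m:ℝ) + 1))^k) atTop (nhds 0) := by
    apply tendsto_pow_atTop_nhds_zero_of_lt_one
    · positivity
    · rw [div_lt_one (by positivity)]
      have : (2:ℝ) ≤ (m:ℝ) := by exact_mod_cast hm
      linarith
  exact squeeze_zero (fun k => (A_pos hm ha k).le) (A_le_pow hm ha) h1






lemma g_nonneg (j : ℕ) : 0 ≤ cantorA a j - cantorA a (j+1) :=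
  sub_nonneg.2 (A_antitone hm ha (Nat.le_succ j))

lemma sum_g (k n : ℕ) :
    ∑ j ∈ Finset.range n, (cantorA a (j+k) - cantorA a (j+k+1)) =
      cantorA a k - cantorA a (n+k) := by
  have := Finset.sum_range_sub' (fun j => cantorA a (j+k)) n
  simpa [Nat.succ_add] using this

lemma summable_g (k : ℕ) :
    Summable (fun j => cantorA a (j+k) - cantorA a (j+k+1)) := by
  apply summable_of_sum_range_le (fun j => g_nonneg hm ha (j+k))
  intro n
  rw [sum_g hm ha]
  have := (A_pos hm ha (n+k)).le
  have := A_antitone hm ha (Nat.zero_le k)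
  simp only [cantorA, Finset.Icc_self, Finset.Icc_eq_empty_of_lt] at *
  linarith [A_antitone hm ha (Nat.zero_le k), (A_pos hm ha (n+k)).le]

lemma hasSum_g (k : ℕ) :
    HasSum (fun j => cantorA a (j+k) - cantorA a (j+k+1)) (cantorA a k) := by
  rw [(summable_g hm ha k).hasSum_iff_tendsto_nat]
  simp only [sum_g hm ha]
  have h2 : Tendsto (fun n : ℕ => cantorA a (n+k)) atTop (nhds 0) :=
    (A_tendsto hm ha).comp (tendsto_add_atTop_nat k)
  have := Tendsto.const_sub (cantorA a k) h2
  simpa using this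





/-- the `j`-th term of the series for digit sequence `d`. -/
noncomputable def trm (m : ℕ) (a : ℕ → ℝ) (d : ℕ → ℕ) (j : ℕ) : ℝ :=
  (d (j + 1) : ℝ) * (cantorA a j - cantorA a (j + 1)) / (m - 1)


lemma hm1 : (0:ℝ) < (m:ℝ) - 1 := by
  have : (2:ℝ) ≤ (m:ℝ) := by exact_mod_cast hm
  linarith

lemma trm_nonneg (d : ℕ → ℕ) (j : ℕ) : 0 ≤ trm m a d j := by
  apply div_nonneg _ (hm1 hm ha).le
  exact mul_nonneg (Nat.cast_nonneg _) (g_nonneg hm ha j)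

lemma trm_le (d : ℕ → ℕ) (hd : ∀ k, d k < m) (j : ℕ) :
    trm m a d j ≤ cantorA a j - cantorA a (j+1) := by
  rw [trm, div_le_iff₀ (hm1 hm ha)]
  have h1 : (d (j+1) : ℝ) ≤ (m:ℝ) - 1 := by
    have := hd (j+1)
    have : (d (j+1) : ℝ) + 1 ≤ (m:ℝ) := by exact_mod_cast this
    linarith
  have := mul_le_mul_of_nonneg_right h1 (g_nonneg hm ha j)
  linarith

lemma summable_trm (d : ℕ → ℕ) (hd : ∀ k, d k < m) (k : ℕ) :
    Summable (fun j => trm m a d (j + k)) := by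
  apply Summable.of_nonneg_of_le (fun j => trm_nonneg hm ha d (j+k))
    (fun j => trm_le hm ha d hd (j+k)) (summable_g hm ha k)

lemma tail_nonneg (d : ℕ → ℕ) (hd : ∀ k, d k < m) (k : ℕ) :
    0 ≤ ∑' j, trm m a d (j + k) :=
  tsum_nonneg (fun j => trm_nonneg hm ha d (j+k))

lemma tail_le (d : ℕ → ℕ) (hd : ∀ k, d k < m) (k : ℕ) :
    ∑' j, trm m a d (j + k) ≤ cantorA a k := by
  rw [← (hasSum_g hm ha k).tsum_eq]
  exact Summable.tsum_le_tsum (fun j => trm_le hm ha d hd (j+k)) (summable_trm hm ha d hd k)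
    (summable_g hm ha k)

lemma split_sum (d : ℕ → ℕ) (hd : ∀ k, d k < m) (k : ℕ) :
    ∑' j, trm m a d j = ∑ j ∈ Finset.range k, trm m a d j + ∑' j, trm m a d (j + k) := by
  have h := summable_trm hm ha d hd 0
  have h0 : Summable (trm m a d) := by simpa using h
  exact (Summable.sum_add_tsum_nat_add k h0).symm







/-- key algebraic identity for the gap. -/
lemma gap_eq (j : ℕ) :
    (cantorA a j - m * cantorA a (j+1)) / ((m:ℝ) - 1)
      = (cantorA a j - cantorA a (j+1)) / ((m:ℝ) - 1) - cantorA a (j+1) := by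
  have h := hm1 hm ha
  field_simp
  ring

lemma lower (d e : ℕ → ℕ) (hd : ∀ k, d k < m) (he : ∀ k, e k < m) (j : ℕ)
    (hagree : ∀ i < j, d (i+1) = e (i+1)) (hlt : e (j+1) < d (j+1)) :
    (cantorA a j - m * cantorA a (j+1)) / ((m:ℝ) - 1)
      ≤ (∑' i, trm m a d i) - (∑' i, trm m a e i) := by
  have hsplitd := split_sum hm ha d hd (j+1)
  have hsplite := split_sum hm ha e he (j+1)
  have hpre : ∑ i ∈ Finset.range j, trm m a d i = ∑ i ∈ Finset.range j, trm m a e i := by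
    apply Finset.sum_congr rfl
    intro i hi
    simp only [trm, hagree i (Finset.mem_range.1 hi)]
  rw [Finset.sum_range_succ] at hsplitd hsplite
  have h1 : (cantorA a j - cantorA a (j+1)) / ((m:ℝ) - 1) ≤ trm m a d j - trm m a e j := by
    have hd1 : (e (j+1) : ℝ) + 1 ≤ (d (j+1) : ℝ) := by exact_mod_cast hlt
    have hg := g_nonneg hm ha j
    have heq : trm m a d j - trm m a e j
        = (((d (j+1):ℝ) - (e (j+1):ℝ)) * (cantorA a j - cantorA a (j+1))) / ((m:ℝ) - 1) := by
      simp only [trm]; ring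
    rw [heq]
    gcongr
    · exact (hm1 hm ha).le
    · nlinarith
  have h2 := tail_nonneg hm ha d hd (j+1)
  have h3 := tail_le hm ha e he (j+1)
  rw [gap_eq hm ha]
  linarith

lemma Gmono {j k : ℕ} (hjk : j ≤ k) :
    (cantorA a k - m * cantorA a (k+1)) / ((m:ℝ) - 1)
      ≤ (cantorA a j - m * cantorA a (j+1)) / ((m:ℝ) - 1) := by
  rcases eq_or_lt_of_le hjk with rfl | hlt
  · exact le_rfl
  · have hm1' := hm1 hm ha
    have hAk : cantorA a k ≤ cantorA a (j+1) := A_antitone hm ha hlt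
    have hAj1 : cantorA a (j+1) ≤ cantorA a j * (1/(m+1)) := A_succ_le hm ha j
    have hAk1 : 0 ≤ cantorA a (k+1) := (A_pos hm ha (k+1)).le
    have hAjpos : 0 < cantorA a j := A_pos hm ha j
    have hmR : (2:ℝ) ≤ (m:ℝ) := by exact_mod_cast hm
    -- cantorA a j - m * cantorA a (j+1) ≥ cantorA a j /(m+1) ≥ cantorA a (j+1) ≥ cantorA a k
    have key : cantorA a k ≤ cantorA a j - m * cantorA a (j+1) := by
      have h5 : (m:ℝ) * cantorA a (j+1) ≤ (m:ℝ) * (cantorA a j * (1/(m+1))) := by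
        apply mul_le_mul_of_nonneg_left hAj1 (by positivity)
      have h6 : cantorA a j - (m:ℝ) * (cantorA a j * (1/(m+1))) = cantorA a j * (1/(m+1)) := by
        field_simp; ring
      nlinarith
    have hnum : cantorA a k - m * cantorA a (k+1) ≤ cantorA a k := by nlinarith
    apply div_le_div_of_nonneg_right (le_trans hnum key) hm1'.le |>.trans
    exact le_refl _

lemma sep {x y : ℝ} (hx : x ∈ cantorLikeSet m a) (hy : y ∈ cantorLikeSet m a) (k : ℕ) :
    |x - y| ≤ cantorA a (k+1) ∨
      (cantorA a k - m * cantorA a (k+1)) / ((m:ℝ) - 1) ≤ |x - y| := by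
  obtain ⟨d, hd, hxd⟩ := hx
  obtain ⟨e, he, hye⟩ := hy
  have hxd' : x = ∑' i, trm m a d i := hxd
  have hye' : y = ∑' i, trm m a e i := hye
  by_cases hag : ∀ j < k+1, d (j+1) = e (j+1)
  · left
    have hsplitd := split_sum hm ha d hd (k+1)
    have hsplite := split_sum hm ha e he (k+1)
    have hpre : ∑ i ∈ Finset.range (k+1), trm m a d i
        = ∑ i ∈ Finset.range (k+1), trm m a e i := by
      apply Finset.sum_congr rfl
      intro i hi
      simp only [trm, hag i (Finset.mem_range.1 hi)]
    have h2 := tail_nonneg hm ha d hd (k+1)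
    have h3 := tail_le hm ha e he (k+1)
    have h4 := tail_nonneg hm ha e he (k+1)
    have h5 := tail_le hm ha d hd (k+1)
    rw [abs_le]
    constructor <;> [linarith [hxd', hye']; linarith [hxd', hye']]
  · right
    push_neg at hag
    classical
    have hP : ∃ n, d (n+1) ≠ e (n+1) := by
      obtain ⟨j, _, hj⟩ := hag; exact ⟨j, hj⟩
    set j0 := Nat.find hP with hj0def
    have hj0ne : d (j0+1) ≠ e (j0+1) := Nat.find_spec hP
    have hmin : ∀ i < j0, d (i+1) = e (i+1) := fun i hi => not_not.1 (Nat.find_min hP hi)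
    have hj0le : j0 ≤ k := by
      obtain ⟨j, hjk, hj⟩ := hag
      have : Nat.find hP ≤ j := Nat.find_le hj
      omega
    rcases lt_or_gt_of_ne hj0ne with hlt | hgt
    · -- d < e : y - x ≥ gap
      have := lower hm ha e d he hd j0 (fun i hi => (hmin i hi).symm) hlt
      have habs : y - x ≤ |x - y| := by
        rw [abs_sub_comm]; exact le_abs_self _
      calc (cantorA a k - m * cantorA a (k+1)) / ((m:ℝ) - 1)
          ≤ (cantorA a j0 - m * cantorA a (j0+1)) / ((m:ℝ) - 1) := Gmono hm ha hj0le
        _ ≤ y - x := by rw [hxd', hye']; exact this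
        _ ≤ |x - y| := habs
    · have := lower hm ha d e hd he j0 hmin hgt
      calc (cantorA a k - m * cantorA a (k+1)) / ((m:ℝ) - 1)
          ≤ (cantorA a j0 - m * cantorA a (j0+1)) / ((m:ℝ) - 1) := Gmono hm ha hj0le
        _ ≤ x - y := by rw [hxd', hye']; exact this
        _ ≤ |x - y| := le_abs_self _


end Stmt11Aux

open Stmt11Aux in
/-- If `liminf a_k = 0` then `E = I_ā × I_ā`, as a compact subset of the plane
(identified with `ℂ`), is HNUP. -/
theorem stmt11 (m : ℕ) (hm : 2 ≤ m) (a : ℕ → ℝ)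
    (ha : ∀ k : ℕ, 1 ≤ k → 0 < a k ∧ a k ≤ 1 / (m + 1))
    (hlim : Filter.liminf a Filter.atTop = 0) :
    HNUP {z : ℂ | z.re ∈ cantorLikeSet m a ∧ z.im ∈ cantorLikeSet m a} := by
  intro F hFE hUP
  obtain ⟨hFc, hFnt, c, hc, hup⟩ := hUP
  obtain ⟨p, hp, q, hq, hpq⟩ := hFnt
  have hmR : (2:ℝ) ≤ (m:ℝ) := by exact_mod_cast hm
  have hm1 : (0:ℝ) < (m:ℝ) - 1 := by linarith
  obtain ⟨D, hDdef⟩ : ∃ D, D = Metric.diam F := ⟨_, rfl⟩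
  rw [← hDdef] at hup
  have hD : 0 < D := by
    have h1 : 0 < dist p q := dist_pos.2 hpq
    have h2 : dist p q ≤ Metric.diam F := Metric.dist_le_diam_of_mem hFc.isBounded hp hq
    rw [← hDdef] at h2
    linarith
  -- the threshold
  obtain ⟨δ, hδdef⟩ : ∃ δ : ℝ, δ = c / (2*((m:ℝ)-1) + c*m) := ⟨_, rfl⟩
  have hden : (0:ℝ) < 2*((m:ℝ)-1) + c*m := by nlinarith
  have hδpos : 0 < δ := hδdef ▸ div_pos hc hden
  -- frequently a n < δ
  have hfreq : ∃ᶠ n in atTop, a n < δ := by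
    by_contra h
    rw [not_frequently] at h
    have h' : ∀ᶠ n in atTop, δ ≤ a n := by
      filter_upwards [h] with n hn
      exact not_lt.1 hn
    have hbdd : IsBoundedUnder (· ≤ ·) atTop a := by
      apply isBoundedUnder_of_eventually_le (a := 1 / ((m:ℝ)+1))
      filter_upwards [eventually_ge_atTop 1] with n hn
      exact (ha n hn).2
    have hcb : IsCoboundedUnder (· ≥ ·) atTop a := hbdd.isCoboundedUnder_ge
    have := le_liminf_of_le hcb h'
    rw [hlim] at this
    linarith
  -- eventually the scale is below D
  have hr0 : (0:ℝ) ≤ 1 / ((m:ℝ)+1) := by positivity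
  have hr1 : (1:ℝ) / ((m:ℝ)+1) < 1 := by
    rw [div_lt_one (by linarith)]; linarith
  have htend : Tendsto (fun n : ℕ => (1 / ((m:ℝ)+1))^n) atTop (nhds 0) :=
    tendsto_pow_atTop_nhds_zero_of_lt_one hr0 hr1
  have hev : ∀ᶠ n : ℕ in atTop, (1 / ((m:ℝ)+1))^(n-1) < D := by
    have h2 : ∀ᶠ n : ℕ in atTop, (1 / ((m:ℝ)+1))^n < D := htend.eventually_lt_const hD
    obtain ⟨N, hN⟩ := eventually_atTop.1 h2
    rw [eventually_atTop]
    exact ⟨N + 1, fun n hn => hN (n-1) (by omega)⟩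
  obtain ⟨n, ⟨hδn, hn1, hrD⟩⟩ :=
    (hfreq.and_eventually ((eventually_ge_atTop 1).and hev)).exists
  have han := ha n hn1
  -- set up the level
  obtain ⟨k, hkdef⟩ : ∃ k, k = n - 1 := ⟨_, rfl⟩
  have hkn : k + 1 = n := by omega
  obtain ⟨K, hKdef⟩ : ∃ K, K = cantorA a k := ⟨_, rfl⟩
  obtain ⟨K1, hK1def⟩ : ∃ K1, K1 = cantorA a (k+1) := ⟨_, rfl⟩
  have hK : 0 < K := hKdef ▸ A_pos hm ha k
  have hK1 : 0 < K1 := hK1def ▸ A_pos hm ha (k+1)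
  have hK1eq : K1 = K * a n := by rw [hK1def, hKdef, A_succ a k, hkn]
  obtain ⟨G, hGdef⟩ : ∃ G, G = (K - m * K1) / ((m:ℝ) - 1) := ⟨_, rfl⟩
  have hδm : δ * (m:ℝ) < 1 := by
    rw [hδdef, div_mul_eq_mul_div, div_lt_one hden]
    nlinarith
  have hanm : a n * (m:ℝ) < 1 := by
    have hm0 : (0:ℝ) ≤ (m:ℝ) := by linarith
    nlinarith [mul_le_mul_of_nonneg_right hδn.le hm0]
  have hnum : 0 < K - m * K1 := by
    rw [hK1eq]; nlinarith
  have hGpos : 0 < G := hGdef ▸ div_pos hnum hm1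
  have hGD : G < D := by
    have h1 : K - m * K1 ≤ K := by nlinarith
    have h2 : G ≤ K - m*K1 := by
      rw [hGdef]
      exact div_le_self hnum.le (by linarith)
    have h3 : K ≤ (1 / ((m:ℝ)+1))^k := hKdef ▸ A_le_pow hm ha k
    calc G ≤ K - m*K1 := h2
      _ ≤ K := h1
      _ ≤ (1 / ((m:ℝ)+1))^k := h3
      _ < D := by rw [hkdef]; exact hrD
  have hkey : 2 * K1 < c * G := by
    have hδn' : a n < c / (2*((m:ℝ)-1) + c*m) := hδdef ▸ hδn
    have h1 : a n * (2*((m:ℝ)-1) + c*m) < c := (lt_div_iff₀ hden).1 hδn'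
    rw [hGdef, ← mul_div_assoc, lt_div_iff₀ hm1, hK1eq]
    nlinarith
  -- apply uniform perfectness
  obtain ⟨y, hyF, hy1, hy2⟩ := hup p hp G hGpos hGD
  have hyE := hFE hyF
  have hpE := hFE hp
  have hnorm : ‖y - p‖ = ‖y - p‖ := rfl
  have hre : |y.re - p.re| ≤ ‖y - p‖ := by
    have h := Complex.abs_re_le_norm (y - p)
    rw [Complex.sub_re] at h
    rw [hnorm]; exact h
  have him : |y.im - p.im| ≤ ‖y - p‖ := by
    have h := Complex.abs_im_le_norm (y - p)
    rw [Complex.sub_im] at h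
    rw [hnorm]; exact h
  have hsepre := sep hm ha hyE.1 hpE.1 k
  have hsepim := sep hm ha hyE.2 hpE.2 k
  have hre' : |y.re - p.re| ≤ K1 := by
    rcases hsepre with h | h
    · exact hK1def ▸ h
    · exfalso
      have hG : G ≤ |y.re - p.re| := by rw [hGdef, hKdef, hK1def]; exact h
      linarith
  have him' : |y.im - p.im| ≤ K1 := by
    rcases hsepim with h | h
    · exact hK1def ▸ h
    · exfalso
      have hG : G ≤ |y.im - p.im| := by rw [hGdef, hKdef, hK1def]; exact h
      linarith
  have hbound : ‖y - p‖ ≤ |y.re - p.re| + |y.im - p.im| := by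
    have h := Complex.norm_le_abs_re_add_abs_im (y - p)
    rw [Complex.sub_re, Complex.sub_im] at h
    rw [hnorm]; exact h
  linarith
end

section
/- Let C(0, t) = {z ∈ ℂ : |z| = t} and let E be the closure of ⋃_{n=1}^∞ C(0, 1/n), i.e., E = {0} ∪ ⋃_{n=1}^∞ C(0, 1/n). Then E is a compact set with m_2(E) = 0 which is not porous. -/
open MeasureTheory Filter Metric

/-- A set `E ⊆ ℂ` is porous if there exists `c > 0` such that for every `a ∈ E` and
every `r > 0` there is a ball `B(b, c·r) ⊆ B(a, r)` disjoint from `E`. -/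
def Porous (E : Set ℂ) : Prop :=
  ∃ c : ℝ, 0 < c ∧ ∀ a ∈ E, ∀ r : ℝ, 0 < r →
    ∃ b : ℂ, Metric.ball b (c * r) ⊆ Metric.ball a r ∧ Metric.ball b (c * r) ∩ E = ∅

/-- The set `E = {0} ∪ ⋃_{n≥1} C(0, 1/n)` (the closure of `⋃_{n≥1} C(0, 1/n)`)
is compact, has `m₂(E) = 0`, and is not porous. -/
theorem stmt14 (E : Set ℂ)
    (hE : E = {0} ∪ ⋃ (n : ℕ) (_ : 1 ≤ n), Metric.sphere (0 : ℂ) (1 / n)) :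
    closure (⋃ (n : ℕ) (_ : 1 ≤ n), Metric.sphere (0 : ℂ) (1 / n)) = E ∧
      IsCompact E ∧ volume E = 0 ∧ ¬ Porous E := by
  set S : Set ℂ := ⋃ (n : ℕ) (_ : 1 ≤ n), Metric.sphere (0 : ℂ) (1 / n) with hS
  set K : Set ℝ := insert (0:ℝ) (Set.range fun n : ℕ => 1/((n:ℝ)+1)) with hKdef
  have hK : IsCompact K :=
    Filter.Tendsto.isCompact_insert_range tendsto_one_div_add_atTop_nhds_zero_nat
  have hKmem : ∀ t : ℝ, t ∈ K ↔ (t = 0 ∨ ∃ m : ℕ, 1/((m:ℝ)+1) = t) := by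
    intro t
    simp [hKdef, eq_comm]
  have hmemS : ∀ z : ℂ, z ∈ S ↔ ∃ n : ℕ, 1 ≤ n ∧ ‖z‖ = 1/(n:ℝ) := by
    intro z
    simp [hS, Set.mem_iUnion, mem_sphere_zero_iff_norm]
  -- membership description of E
  have hmem : ∀ z : ℂ, z ∈ E ↔ ‖z‖ ∈ K := by
    intro z
    rw [hE, Set.mem_union, Set.mem_singleton_iff, hmemS z, hKmem]
    constructor
    · rintro (rfl | ⟨n, hn, h⟩)
      · left; simp
      · right
        refine ⟨n - 1, ?_⟩
        rw [h]
        have : ((n - 1 : ℕ) : ℝ) + 1 = (n : ℝ) := by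
          push_cast [Nat.cast_sub hn]
          ring
        rw [this]
    · rintro (h | ⟨m, h⟩)
      · left; exact norm_eq_zero.mp h
      · right
        exact ⟨m + 1, Nat.le_add_left 1 m, by rw [← h]; push_cast; ring⟩
  have hEK : E = (fun z : ℂ => ‖z‖) ⁻¹' K := Set.ext hmem
  have hEclosed : IsClosed E := by
    rw [hEK]; exact hK.isClosed.preimage continuous_norm
  have hSE : S ⊆ E := by rw [hE]; exact Set.subset_union_right
  have h0E : (0 : ℂ) ∈ E := by rw [hE]; exact Or.inl rfl
  have hclos : closure S = E := by
    apply le_antisymm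
    · exact closure_minimal hSE hEclosed
    · rw [hE]
      rintro z (rfl | hz)
      · -- 0 is a limit of points of S
        have h1 : Filter.Tendsto (fun n : ℕ => ((1/((n:ℝ)+1) : ℝ) : ℂ)) atTop (nhds 0) := by
          have : Filter.Tendsto (fun n : ℕ => (1/((n:ℝ)+1) : ℝ)) atTop (nhds 0) :=
            tendsto_one_div_add_atTop_nhds_zero_nat
          exact Complex.ofReal_zero ▸ ((Complex.continuous_ofReal.tendsto 0).comp this)
        refine mem_closure_of_tendsto h1 ?_
        filter_upwards with n
        rw [hmemS]
        refine ⟨n + 1, Nat.le_add_left 1 n, ?_⟩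
        rw [Complex.norm_real, Real.norm_eq_abs, abs_of_pos (by positivity)]
        push_cast
        ring
      · exact subset_closure hz
  refine ⟨hclos, ?_, ?_, ?_⟩
  · -- compact
    apply Metric.isCompact_of_isClosed_isBounded hEclosed
    have hsub : E ⊆ Metric.closedBall 0 1 := by
      intro z hz
      rw [Metric.mem_closedBall, dist_zero_right]
      rcases (hKmem _).mp ((hmem z).mp hz) with h | ⟨m, h⟩
      · rw [h]; exact zero_le_one
      · rw [← h]
        rw [div_le_one (by positivity)]
        have : (0:ℝ) ≤ (m:ℝ) := Nat.cast_nonneg m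
        linarith
    exact (Metric.isBounded_closedBall).subset hsub
  · -- measure zero
    rw [hE]
    refine measure_union_null (by simp) ?_
    refine measure_iUnion_null fun n => measure_iUnion_null fun _ => ?_
    exact Measure.addHaar_sphere volume 0 _
  · -- not porous
    rintro ⟨c, hc, h⟩
    set m : ℕ := ⌈2/c⌉₊ with hm
    have hm1 : 1 ≤ m := Nat.one_le_iff_ne_zero.mpr (by
      simp only [hm, ne_eq, Nat.ceil_eq_zero, not_le]
      positivity)
    have hmR : (2:ℝ)/c ≤ m := Nat.le_ceil _
    have hmpos : (0:ℝ) < m := by exact_mod_cast hm1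
    have hm0 : (m:ℝ) ≠ 0 := ne_of_gt hmpos
    set r : ℝ := 1/(2*(m:ℝ)) with hr
    have hrpos : 0 < r := by positivity
    set a : ℂ := ((r : ℝ) : ℂ) with ha
    have hna : ‖a‖ = r := by
      rw [ha, Complex.norm_real, Real.norm_eq_abs, abs_of_pos hrpos]
    have haE : a ∈ E := by
      rw [hmem, hna, hKmem]
      right
      refine ⟨2*m - 1, ?_⟩
      have h2m : 1 ≤ 2*m := by omega
      have : ((2*m - 1 : ℕ) : ℝ) + 1 = 2*(m:ℝ) := by
        push_cast [Nat.cast_sub h2m]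
        ring
      rw [this, hr]
    obtain ⟨b, hsub, hdisj⟩ := h a haE r hrpos
    have hcrpos : 0 < c * r := by positivity
    have hbmem : b ∈ Metric.ball b (c * r) := Metric.mem_ball_self hcrpos
    have hnotE : ∀ z ∈ Metric.ball b (c*r), z ∉ E := fun z hz hzE => by
      have : z ∈ Metric.ball b (c*r) ∩ E := ⟨hz, hzE⟩
      rw [hdisj] at this; exact this
    have hb0 : b ≠ 0 := fun hb0 => hnotE b hbmem (hb0 ▸ h0E)
    set x : ℝ := ‖b‖ with hx
    have hxpos : 0 < x := norm_pos_iff.mpr hb0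
    have hxlt : x < 1/(m:ℝ) := by
      have hba := hsub hbmem
      rw [Metric.mem_ball] at hba
      have h2 : ‖b‖ ≤ dist b a + ‖a‖ := by
        rw [dist_eq_norm]
        linarith [norm_sub_norm_le b a]
      have h3 : x < r + r := by rw [hx]; linarith [hna ▸ h2]
      have h4 : r + r = 1/(m:ℝ) := by rw [hr]; field_simp; norm_num
      linarith
    set k : ℕ := ⌊1/x⌋₊ with hk
    have hk_le : (k:ℝ) ≤ 1/x := Nat.floor_le (by positivity)
    have hk_lt : 1/x < (k:ℝ) + 1 := Nat.lt_floor_add_one _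
    have hmk : m ≤ k := by
      apply Nat.le_floor
      have : (m:ℝ) < 1/x := by
        rw [lt_div_iff₀ hxpos]
        calc (m:ℝ) * x < (m:ℝ) * (1/(m:ℝ)) := mul_lt_mul_of_pos_left hxlt hmpos
          _ = 1 := by field_simp
      linarith
    have hmkR : (m:ℝ) ≤ (k:ℝ) := by exact_mod_cast hmk
    have hk1 : 1 ≤ k := le_trans hm1 hmk
    have hkpos : (0:ℝ) < k := by exact_mod_cast hk1
    have hk0 : (k:ℝ) ≠ 0 := ne_of_gt hkpos
    have hkx : (k:ℝ) * x ≤ 1 := by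
      have := mul_le_mul_of_nonneg_right hk_le (le_of_lt hxpos)
      calc (k:ℝ) * x ≤ (1/x) * x := this
        _ = 1 := by field_simp
    have hx_gt : 1/((k:ℝ)+1) < x := by
      rw [div_lt_iff₀ (by positivity)]
      rw [div_lt_iff₀ hxpos] at hk_lt
      linarith
    -- the witness point on the circle of radius 1/k
    set p : ℂ := (((1/((k:ℝ)*x)) : ℝ) : ℂ) * b with hp
    have hnp : ‖p‖ = 1/(k:ℝ) := by
      rw [hp, norm_mul, Complex.norm_real, Real.norm_eq_abs,
        abs_of_pos (by positivity), ← hx]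
      field_simp
    have hpE : p ∈ E := by
      rw [hmem, hnp, hKmem]
      right
      refine ⟨k - 1, ?_⟩
      have : ((k - 1 : ℕ) : ℝ) + 1 = (k : ℝ) := by
        push_cast [Nat.cast_sub hk1]
        ring
      rw [this]
    have hdist : dist p b = 1/(k:ℝ) - x := by
      rw [dist_eq_norm]
      have hpb : p - b = (((1/((k:ℝ)*x) - 1 : ℝ)):ℂ) * b := by
        rw [hp]; push_cast; ring
      rw [hpb, norm_mul, Complex.norm_real, Real.norm_eq_abs, ← hx,
        abs_of_nonneg ?_]
      · field_simp
      · have h1 : (1:ℝ) ≤ 1/((k:ℝ)*x) := by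
          rw [le_div_iff₀ (by positivity)]
          linarith
        linarith
    have hdlt : dist p b < c * r := by
      rw [hdist, hr]
      have step1 : (2:ℝ)/c < (k:ℝ) + 1 := by
        calc (2:ℝ)/c ≤ (m:ℝ) := hmR
          _ ≤ (k:ℝ) := hmkR
          _ < (k:ℝ) + 1 := lt_add_one _
      have step1' : 2 < c * ((k:ℝ)+1) := by
        rw [div_lt_iff₀ hc] at step1
        linarith
      have step2 : 1/((k:ℝ)*((k:ℝ)+1)) < c/(2*(k:ℝ)) := by
        rw [div_lt_div_iff₀ (by positivity) (by positivity)]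
        nlinarith
      have step3 : c/(2*(k:ℝ)) ≤ c/(2*(m:ℝ)) := by
        gcongr
      have step4 : 1/(k:ℝ) - x < 1/((k:ℝ)*((k:ℝ)+1)) := by
        have : 1/((k:ℝ)*((k:ℝ)+1)) = 1/(k:ℝ) - 1/((k:ℝ)+1) := by
          rw [div_sub_div _ _ hk0 (by positivity : ((k:ℝ)+1) ≠ 0)]
          congr 1
          ring
        rw [this]
        linarith
      calc 1/(k:ℝ) - x < 1/((k:ℝ)*((k:ℝ)+1)) := step4
        _ < c/(2*(k:ℝ)) := step2
        _ ≤ c/(2*(m:ℝ)) := step3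
        _ = c * (1/(2*(m:ℝ))) := by ring
    exact hnotE p (Metric.mem_ball.mpr hdlt) hpE
end
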